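/- For every ε > 0 there exists n₀ such that for all n > n₀ the following holds. Let P(n) be the set of multisets of prime powers (each element a prime power greater than 1) whose product is n, and for m ∈ P(n) let r(m) be the number of elements of m that are powers of 2. Then the number of m ∈ P(n) with 2^{r(m)} > ε·n is at most ε·|P(n)|. -/

import Mathlib

lemma aux_sum_distinct (S : Finset ℕ) : S.card * (S.card - 1) ≤ 2 * S.sum id := by
  induction S using Finset.induction_on_max with
  | empty => simp
  | insert a s ha ih =>
    have hnot : a ∉ s := fun h => lt_irrefl a (ha a h)
    have hcard : s.card ≤ a := by
      simpa using Finset.card_le_card (fun x hx => Finset.mem_range.mpr (ha x hx))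
    rw [Finset.card_insert_of_notMem hnot, Finset.sum_insert hnot]
    have e : (s.card + 1) * (s.card + 1 - 1) = s.card * (s.card - 1) + 2 * s.card := by
      cases s.card with
      | zero => rfl
      | succ d => simp only [Nat.succ_sub_one]; ring
    simp only [id_eq] at *
    omega

open Classical in
lemma count_key (n K : ℕ) (hn : n ≠ 0) (T B : Finset (Multiset ℕ))
    (hT : ∀ m, m ∈ T ↔ (∀ q ∈ m, IsPrimePow q) ∧ m.prod = n)
    (hB : ∀ m ∈ B, (∀ q ∈ m, IsPrimePow q) ∧ m.prod = n ∧ K ≤ m.count 2) :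
    B.card * (K - 1) ≤ (Nat.sqrt (2 * Nat.log 2 n) + 1) * T.card := by
  set L := Nat.log 2 n with hL
  set D := Nat.sqrt (2 * L) + 1 with hD
  set F : Multiset ℕ × ℕ → Multiset ℕ :=
    fun p => (p.1 - Multiset.replicate p.2 2) + {2 ^ p.2} with hF
  set P : Finset (Multiset ℕ × ℕ) := B ×ˢ Finset.Icc 2 K with hP
  have hmemP : ∀ p ∈ P, p.1 ∈ B ∧ 2 ≤ p.2 ∧ p.2 ≤ K := by
    intro p hp
    rw [hP, Finset.mem_product, Finset.mem_Icc] at hp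
    exact ⟨hp.1, hp.2.1, hp.2.2⟩
  have hrep : ∀ p ∈ P, Multiset.replicate p.2 2 ≤ p.1 := by
    intro p hp
    obtain ⟨h1, _, h3⟩ := hmemP p hp
    exact Multiset.le_count_iff_replicate_le.mp (le_trans h3 (hB p.1 h1).2.2)
  have himg : ∀ p ∈ P, F p ∈ T := by
    intro p hp
    obtain ⟨h1, h2, h3⟩ := hmemP p hp
    obtain ⟨hpp, hprod, _⟩ := hB p.1 h1
    have hsplit : p.1 - Multiset.replicate p.2 2 + Multiset.replicate p.2 2 = p.1 :=
      tsub_add_cancel_of_le (hrep p hp)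
    rw [hT]
    constructor
    · intro q hq
      rcases Multiset.mem_add.mp hq with h | h
      · exact hpp q (Multiset.mem_of_le (Multiset.sub_le_self _ _) h)
      · rw [Multiset.mem_singleton.mp h]
        exact ⟨2, p.2, Nat.prime_two.prime, by omega, rfl⟩
    · have e1 : p.1.prod = (p.1 - Multiset.replicate p.2 2).prod * 2 ^ p.2 := by
        conv_lhs => rw [← hsplit]
        rw [Multiset.prod_add, Multiset.prod_replicate]
      rw [hF]
      simp only [Multiset.prod_add, Multiset.prod_singleton]
      rw [← e1, hprod]
  have hrec : ∀ p ∈ P, p.1 = (F p - {2 ^ p.2}) + Multiset.replicate p.2 2 := by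
    intro p hp
    rw [hF]
    simp only [add_tsub_cancel_right]
    exact (tsub_add_cancel_of_le (hrep p hp)).symm
  have hcard1 : P.card = B.card * (K - 1) := by
    rw [hP, Finset.card_product, Nat.card_Icc]
    congr 1
  have hfiber : ∀ x ∈ P.image F, (P.filter fun p => F p = x).card ≤ D := by
    intro x hx
    have hxT : x ∈ T := by
      obtain ⟨p, hp, rfl⟩ := Finset.mem_image.mp hx
      exact himg p hp
    obtain ⟨hxpp, hxprod⟩ := (hT x).mp hxT
    set Sx : Finset ℕ := (Finset.Icc 2 K).filter (fun k => (2 : ℕ) ^ k ∈ x) with hSx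
    have hstep1 : (P.filter fun p => F p = x).card ≤ Sx.card := by
      apply Finset.card_le_card_of_injOn (fun p => p.2)
      · intro p hp
        simp only [Finset.coe_filter, Set.mem_setOf_eq, Finset.mem_coe] at hp ⊢
        obtain ⟨h1, _, h3⟩ := hmemP p hp.1
        rw [hSx, Finset.mem_filter, Finset.mem_Icc]
        refine ⟨⟨(hmemP p hp.1).2.1, h3⟩, ?_⟩
        rw [← hp.2, hF]
        simp
      · intro p hp q hq hpq
        simp only [Finset.coe_filter, Set.mem_setOf_eq] at hp hq
        have e1 := hrec p hp.1
        have e2 := hrec q hq.1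
        rw [hp.2] at e1
        rw [hq.2] at e2
        have hpq' : p.2 = q.2 := hpq
        have : p.1 = q.1 := by rw [e1, e2, hpq']
        exact Prod.ext this hpq'
    have hsum : Sx.sum id ≤ L := by
      have hsub : (Sx.image (fun k => (2:ℕ) ^ k)).val ≤ x := by
        calc (Sx.image (fun k => (2:ℕ) ^ k)).val ≤ x.toFinset.val := by
              rw [Finset.val_le_iff]
              intro y hy
              obtain ⟨k, hk, rfl⟩ := Finset.mem_image.mp hy
              rw [hSx, Finset.mem_filter] at hk
              exact Multiset.mem_toFinset.mpr hk.2
          _ ≤ x := by rw [Multiset.toFinset_val]; exact Multiset.dedup_le x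
      have hdvd : ((Sx.image (fun k => (2:ℕ) ^ k)).val).prod ∣ n := by
        rw [← hxprod]
        exact Multiset.prod_dvd_prod_of_le hsub
      have hinj : Set.InjOn (fun k => (2:ℕ) ^ k) ↑Sx :=
        fun a _ b _ hab => Nat.pow_right_injective (le_refl 2) hab
      have e : ((Sx.image (fun k => (2:ℕ) ^ k)).val).prod = 2 ^ Sx.sum id := by
        have e0 : ((Sx.image (fun k => (2:ℕ) ^ k)).val).prod = ∏ y ∈ Sx.image (fun k => (2:ℕ) ^ k), y := by
          rw [Finset.prod_eq_multiset_prod]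
          simp
        rw [e0, Finset.prod_image (fun a ha b hb => hinj ha hb)]
        simpa using Finset.prod_pow_eq_pow_sum Sx (fun k => k) 2
      rw [e] at hdvd
      exact (Nat.le_log_iff_pow_le one_lt_two hn).mpr
        (Nat.le_of_dvd (Nat.pos_of_ne_zero hn) hdvd)
    have hdd := aux_sum_distinct Sx
    by_contra hcon
    push_neg at hcon
    have h2 : Nat.sqrt (2 * L) + 1 ≤ Sx.card - 1 := by omega
    have h1 : 2 * L < (Nat.sqrt (2 * L) + 1) * (Nat.sqrt (2 * L) + 1) := by
      have := Nat.lt_succ_sqrt' (2 * L)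
      simpa [pow_two] using this
    have h3 : (Nat.sqrt (2 * L) + 1) * (Nat.sqrt (2 * L) + 1) ≤ (Sx.card - 1) * (Sx.card - 1) :=
      Nat.mul_le_mul h2 h2
    have h4 : (Sx.card - 1) * (Sx.card - 1) ≤ Sx.card * (Sx.card - 1) :=
      Nat.mul_le_mul_right _ (by omega)
    have h5 : 2 * Sx.sum id ≤ 2 * L := by omega
    omega
  calc B.card * (K - 1) = P.card := hcard1.symm
    _ ≤ D * (P.image F).card := Finset.card_le_mul_card_image P D hfiber
    _ ≤ D * T.card := by
        apply Nat.mul_le_mul_left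
        apply Finset.card_le_card
        intro x hx
        obtain ⟨p, hp, rfl⟩ := Finset.mem_image.mp hx
        exact himg p hp

set_option maxHeartbeats 1000000 in
open Classical in
/-- For every `ε > 0`, for all sufficiently large `n`, among the multisets of prime
powers with product `n` (which are in bijection with isomorphism classes of abelian
groups of order `n`), the proportion of those `m` whose number `r(m)` of power-of-2
elements satisfies `2 ^ r(m) > ε * n` is at most `ε`. -/
theorem almost_all_abelian_groups_have_few_even_factors :
    ∀ ε : ℝ, ε > 0 → ∃ n₀ : ℕ, ∀ n : ℕ, n > n₀ →
      ({m : Multiset ℕ | (∀ q ∈ m, IsPrimePow q) ∧ m.prod = n ∧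
          (2 : ℝ) ^ (Multiset.card (m.filter fun q => ∃ j : ℕ, q = 2 ^ j)) > ε * n}.ncard : ℝ)
        ≤ ε * ({m : Multiset ℕ | (∀ q ∈ m, IsPrimePow q) ∧ m.prod = n}.ncard : ℝ) := by
  intro ε hε
  obtain ⟨c, hc⟩ : ∃ c : ℕ, 1 / ε < 2 ^ c := pow_unbounded_of_one_lt (1 / ε) one_lt_two
  obtain ⟨L₀, hL₀⟩ : ∃ L₀ : ℕ, 4 / (3 * ε) * (2 / ε + 1 + 2 * c * ε + ε) < L₀ := exists_nat_gt _
  refine ⟨2 ^ (max L₀ (2 * c + 2)), fun n hn => ?_⟩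
  have hn1 : 1 ≤ 2 ^ (max L₀ (2 * c + 2)) := Nat.one_le_two_pow
  have hn0 : n ≠ 0 := by omega
  set L := Nat.log 2 n with hLdef
  have hLge : max L₀ (2 * c + 2) ≤ L := by
    have h := Nat.log_mono_right (b := 2) (le_of_lt hn)
    rwa [Nat.log_pow one_lt_two] at h
  have hL2c : 2 * c + 2 ≤ L := le_trans (le_max_right _ _) hLge
  have hLL0 : L₀ ≤ L := le_trans (le_max_left _ _) hLge
  set K := L - 2 * c + 2 with hKdef
  have hTfin : {m : Multiset ℕ | (∀ q ∈ m, IsPrimePow q) ∧ m.prod = n}.Finite := by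
    apply Set.Finite.subset ((n • (n.divisors.val)).powerset.toFinset).finite_toSet
    intro m hm
    obtain ⟨hpp, hprod⟩ := hm
    simp only [Finset.coe_sort_coe, Finset.mem_coe, Multiset.mem_toFinset,
      Multiset.mem_powerset]
    rw [Multiset.le_iff_count]
    intro a
    by_cases hma : a ∈ m
    · have hdvd : a ∣ n := hprod ▸ Multiset.dvd_prod hma
      have hcm : Multiset.card m ≤ n := by
        have h1 : 2 ^ Multiset.card m ≤ m.prod :=
          Multiset.pow_card_le_prod (fun q hq => (hpp q hq).two_le)
        have h2 := Nat.lt_two_pow_self (n := Multiset.card m)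
        omega
      have hcnt : Multiset.count a (n • n.divisors.val) = n := by
        rw [Multiset.count_nsmul,
          Multiset.count_eq_one_of_mem n.divisors.nodup
            (Nat.mem_divisors.mpr ⟨hdvd, hn0⟩), mul_one]
      rw [hcnt]
      exact le_trans (Multiset.count_le_card a m) hcm
    · simp [Multiset.count_eq_zero_of_notMem hma]
  have hBsub : {m : Multiset ℕ | (∀ q ∈ m, IsPrimePow q) ∧ m.prod = n ∧
      (2 : ℝ) ^ (Multiset.card (m.filter fun q => ∃ j : ℕ, q = 2 ^ j)) > ε * n}
      ⊆ {m : Multiset ℕ | (∀ q ∈ m, IsPrimePow q) ∧ m.prod = n} :=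
    fun m hm => ⟨hm.1, hm.2.1⟩
  have hBfin := hTfin.subset hBsub
  rw [Set.ncard_eq_toFinset_card _ hBfin, Set.ncard_eq_toFinset_card _ hTfin]
  have hB : ∀ m ∈ hBfin.toFinset,
      (∀ q ∈ m, IsPrimePow q) ∧ m.prod = n ∧ K ≤ m.count 2 := by
    intro m hm
    rw [Set.Finite.mem_toFinset] at hm
    obtain ⟨hpp, hprod, hbad⟩ := hm
    refine ⟨hpp, hprod, ?_⟩
    set r := Multiset.card (m.filter fun q => ∃ j : ℕ, q = 2 ^ j) with hr
    have hn1R : (1 : ℝ) ≤ (n : ℝ) := by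
      exact_mod_cast Nat.one_le_iff_ne_zero.mpr hn0
    have hεc : (1 : ℝ) < ε * 2 ^ c := by
      rw [div_lt_iff₀ hε, mul_comm] at hc
      exact hc
    have hpc : (0:ℝ) < 2 ^ c := by positivity
    have hlt : (n : ℝ) < 2 ^ (r + c) := by
      have step1 : (n : ℝ) ≤ ε * n * 2 ^ c := by nlinarith [Nat.cast_nonneg (α := ℝ) n]
      calc (n:ℝ) ≤ ε * n * 2 ^ c := step1
        _ < 2 ^ r * 2 ^ c := mul_lt_mul_of_pos_right hbad hpc
        _ = 2 ^ (r + c) := (pow_add 2 r c).symm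
    have hltn : n < 2 ^ (r + c) := by exact_mod_cast hlt
    have hLr : L + 1 ≤ r + c := by
      have h1 : 2 ^ L ≤ n := Nat.pow_log_le_self 2 hn0
      have h2 : (2:ℕ) ^ L < 2 ^ (r + c) := lt_of_le_of_lt h1 hltn
      have h3 := (Nat.pow_lt_pow_iff_right (a := 2) one_lt_two).mp h2
      omega
    set t := Multiset.count 2 m with ht
    set m2 := m.filter (fun q => ∃ j : ℕ, q = 2 ^ j) with hm2
    have hcount2 : Multiset.count 2 m2 = t :=
      Multiset.count_filter_of_pos ⟨1, by norm_num⟩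
    have htr : t ≤ r := by rw [← hcount2]; exact Multiset.count_le_card 2 m2
    have hsplit := Multiset.filter_add_not (fun q => q = 2) m2
    set m4 := m2.filter (fun q => ¬ q = 2) with hm4
    have hcards : Multiset.card (m2.filter (fun q => q = 2)) + Multiset.card m4 = r := by
      rw [← Multiset.card_add, hsplit]
    have hfeq : m2.filter (fun q => q = 2) = Multiset.replicate t 2 := by
      rw [Multiset.filter_eq', hcount2]
    have hm4card : Multiset.card m4 = r - t := by
      rw [hfeq, Multiset.card_replicate] at hcards; omega
    have hm4ge : ∀ q ∈ m4, 4 ≤ q := by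
      intro q hq
      rw [hm4, Multiset.mem_filter] at hq
      obtain ⟨hq2, hqne⟩ := hq
      rw [hm2, Multiset.mem_filter] at hq2
      obtain ⟨hqm, j, rfl⟩ := hq2
      have hppq := hpp _ hqm
      have hj0 : j ≠ 0 := by rintro rfl; exact absurd hppq.two_le (by norm_num)
      have hj1 : j ≠ 1 := by rintro rfl; exact hqne (by norm_num)
      calc (4:ℕ) = 2 ^ 2 := by norm_num
        _ ≤ 2 ^ j := Nat.pow_le_pow_right (by norm_num) (by omega)
    have hprod2 : 2 ^ (t + 2 * (r - t)) ≤ m2.prod := by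
      have e1 : m2.prod = 2 ^ t * m4.prod := by
        conv_lhs => rw [← hsplit]
        rw [Multiset.prod_add, hfeq, Multiset.prod_replicate]
      rw [e1]
      have h4 : 4 ^ Multiset.card m4 ≤ m4.prod := Multiset.pow_card_le_prod hm4ge
      calc 2 ^ (t + 2 * (r - t)) = 2 ^ t * 4 ^ (r - t) := by
            rw [pow_add, pow_mul]; norm_num
        _ ≤ 2 ^ t * m4.prod := Nat.mul_le_mul_left _ (hm4card ▸ h4)
    have hdvd : m2.prod ∣ n := hprod ▸ Multiset.prod_dvd_prod_of_le (Multiset.filter_le _ m)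
    have hle : t + 2 * (r - t) ≤ L :=
      (Nat.le_log_iff_pow_le one_lt_two hn0).mpr
        (le_trans hprod2 (Nat.le_of_dvd (Nat.pos_of_ne_zero hn0) hdvd))
    omega
  have hKey := count_key n K hn0 hTfin.toFinset hBfin.toFinset
      (fun m => hTfin.mem_toFinset) hB
  set BC := hBfin.toFinset.card with hBC
  set TC := hTfin.toFinset.card with hTC
  clear_value BC TC
  have hKnat : K - 1 + 2 * c = L + 1 := by omega
  have hK1 : (1:ℕ) ≤ K - 1 := by omega
  have hcast : ((K - 1 : ℕ) : ℝ) = (L : ℝ) + 1 - 2 * c := by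
    have h := congrArg (fun x : ℕ => (x : ℝ)) hKnat
    push_cast at h
    linarith
  have hsq : Real.sqrt (2 * (L:ℝ)) ≤ ε * L / 4 + 2 / ε := by
    have ha : (0:ℝ) ≤ ε * L / 4 := by positivity
    have hb : (0:ℝ) ≤ 2 / ε := by positivity
    have h2 : (2 * (L:ℝ)) ≤ (ε * L / 4 + 2 / ε) ^ 2 := by
      have h4ab : 4 * (ε * L / 4) * (2 / ε) = 2 * L := by field_simp
      nlinarith [sq_nonneg (ε * L / 4 - 2 / ε)]
    calc Real.sqrt (2 * L) ≤ Real.sqrt ((ε * L / 4 + 2 / ε) ^ 2) := Real.sqrt_le_sqrt h2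
      _ = ε * L / 4 + 2 / ε := Real.sqrt_sq (by linarith)
  have hDle : ((Nat.sqrt (2 * L) + 1 : ℕ) : ℝ) ≤ ε * ((K - 1 : ℕ) : ℝ) := by
    have h1 : ((Nat.sqrt (2 * L) : ℕ) : ℝ) ≤ Real.sqrt ((2 * L : ℕ) : ℝ) :=
      Real.nat_sqrt_le_real_sqrt
    have h1' : ((2 * L : ℕ) : ℝ) = 2 * (L:ℝ) := by push_cast; ring
    rw [h1'] at h1
    have hLreal : (L₀ : ℝ) ≤ (L : ℝ) := by exact_mod_cast hLL0
    have hY : 4 / (3 * ε) * (2 / ε + 1 + 2 * c * ε + ε) < (L:ℝ) := lt_of_lt_of_le hL₀ hLreal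
    have hY' : 2 / ε + 1 + 2 * c * ε + ε < 3 * ε / 4 * L := by
      have h3 : (0:ℝ) < 3 * ε / 4 := by positivity
      calc 2/ε + 1 + 2*(c:ℝ)*ε + ε
          = 3*ε/4 * (4/(3*ε) * (2/ε+1+2*c*ε+ε)) := by field_simp
        _ < 3*ε/4 * L := mul_lt_mul_of_pos_left hY h3
    rw [hcast]
    push_cast
    nlinarith [hsq, h1, hY']
  have hnatR : (BC : ℝ) * ((K - 1 : ℕ) : ℝ)
      ≤ ((Nat.sqrt (2 * L) + 1 : ℕ) : ℝ) * (TC : ℝ) := by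
    exact_mod_cast hKey
  have hK1R : (0:ℝ) < ((K - 1 : ℕ) : ℝ) := by exact_mod_cast hK1
  have hTpos : (0:ℝ) ≤ (TC : ℝ) := Nat.cast_nonneg _
  have hfin : (BC : ℝ) * ((K - 1 : ℕ) : ℝ)
      ≤ (ε * (TC : ℝ)) * ((K - 1 : ℕ) : ℝ) := by
    calc (BC : ℝ) * ((K-1:ℕ):ℝ)
        ≤ ((Nat.sqrt (2*L)+1 : ℕ):ℝ) * (TC : ℝ) := hnatR
      _ ≤ (ε * ((K-1:ℕ):ℝ)) * (TC : ℝ) :=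
          mul_le_mul_of_nonneg_right hDle hTpos
      _ = (ε * (TC : ℝ)) * ((K-1:ℕ):ℝ) := by ring
  exact le_of_mul_le_mul_right hfin hK1R
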